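/- arXiv:math/0312156 — 2 statements merged into one kernel-verified Lean document; each statement's English description precedes it below -/
import Mathlib

section
/- Nontriviality of the 2-cocycle: There is no ℂ-linear map θ: L → ℂ such that c(μ,ν) = θ([μ,ν]) for all μ, ν ∈ L = sl₂(ℂ[x,y]); that is, the 2-cocycle c(μ,ν) = ε(Tr(∂ₓμ · ∂_yν − ∂_yμ · ∂ₓν)) is not a Lie algebra 2-coboundary, so it represents a nonzero class in H²(sl₂[x,y]). -/
open scoped BigOperators

attribute [local instance 100] LieRing.ofAssociativeRing

/-- `R = ℂ[x,y]`, the polynomial ring in two variables `x = X 0`, `y = X 1`. -/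
abbrev PolyXY : Type := MvPolynomial (Fin 2) ℂ

/-- Entrywise partial derivative `∂ₓ` of a matrix over `ℂ[x,y]`. -/
noncomputable def dX (μ : Matrix (Fin 2) (Fin 2) PolyXY) :
    Matrix (Fin 2) (Fin 2) PolyXY :=
  Matrix.of fun i j => MvPolynomial.pderiv (0 : Fin 2) (μ i j)

/-- Entrywise partial derivative `∂_y` of a matrix over `ℂ[x,y]`. -/
noncomputable def dY (μ : Matrix (Fin 2) (Fin 2) PolyXY) :
    Matrix (Fin 2) (Fin 2) PolyXY :=
  Matrix.of fun i j => MvPolynomial.pderiv (1 : Fin 2) (μ i j)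

/-- The 2-cochain `c(μ,ν) = ε(Tr(∂ₓμ · ∂_yν − ∂_yμ · ∂ₓν))`, where `ε` is the
constant-term homomorphism. -/
noncomputable def cocycleC (μ ν : Matrix (Fin 2) (Fin 2) PolyXY) : ℂ :=
  MvPolynomial.constantCoeff (Matrix.trace (dX μ * dY ν - dY μ * dX ν))

/-- `L = sl₂(ℂ[x,y])`: the trace-zero `2 × 2` matrices over `ℂ[x,y]`, as a
Lie algebra over `ℂ`. -/
noncomputable def sl2XY : LieSubalgebra ℂ (Matrix (Fin 2) (Fin 2) PolyXY) where
  carrier := {μ | Matrix.trace μ = 0}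
  add_mem' := fun {a b} ha hb => by
    simp only [Set.mem_setOf_eq] at *
    rw [Matrix.trace_add, ha, hb, add_zero]
  zero_mem' := by simp [Set.mem_setOf_eq]
  smul_mem' := fun c {a} ha => by
    simp only [Set.mem_setOf_eq] at *
    rw [Matrix.trace_smul, ha, smul_zero]
  lie_mem' := fun {a b} _ _ => by
    simp only [Set.mem_setOf_eq]
    rw [Ring.lie_def, Matrix.trace_sub, Matrix.trace_mul_comm, sub_self]

/-- **Nontriviality of the 2-cocycle** (cf. Proposition 3.6 of the paper):
the cocycle `c(μ,ν) = ε(Tr(∂ₓμ · ∂_yν − ∂_yμ · ∂ₓν))` on `sl₂(ℂ[x,y])` is not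
a coboundary `θ ∘ [·,·]` for any `ℂ`-linear `θ`, so it represents a nonzero
class in `H²(sl₂[x,y])`. -/
theorem sl2_polyXY_cocycle_nontrivial :
    ¬∃ θ : sl2XY →ₗ[ℂ] ℂ,
      ∀ μ ν : sl2XY, cocycleC (μ : Matrix (Fin 2) (Fin 2) PolyXY) ν = θ ⁅μ, ν⁆ := by
  rintro ⟨θ, hθ⟩
  set h : Matrix (Fin 2) (Fin 2) PolyXY := !![1, 0; 0, -1] with hh
  have hmem : ∀ p : PolyXY, p • h ∈ sl2XY := by
    intro p
    show Matrix.trace (p • h) = 0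
    simp [hh, Matrix.trace_fin_two]
  set μ : sl2XY := ⟨(MvPolynomial.X 0 : PolyXY) • h, hmem _⟩ with hμ
  set ν : sl2XY := ⟨(MvPolynomial.X 1 : PolyXY) • h, hmem _⟩ with hν
  have hbr : ⁅μ, ν⁆ = 0 := by
    apply Subtype.ext
    show (μ : Matrix (Fin 2) (Fin 2) PolyXY) * ν - (ν : Matrix (Fin 2) (Fin 2) PolyXY) * μ = 0
    ext i j
    fin_cases i <;> fin_cases j <;>
      simp [hμ, hν, hh, Matrix.mul_apply, Fin.sum_univ_two, Matrix.smul_apply] <;> ring_nf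
  have hc : cocycleC (μ : Matrix (Fin 2) (Fin 2) PolyXY) ν = 2 := by
    have hdXμ : dX (μ : Matrix (Fin 2) (Fin 2) PolyXY) = h := by
      ext i j
      fin_cases i <;> fin_cases j <;>
        simp [dX, hμ, hh, Matrix.smul_apply, smul_eq_mul]
    have hdYμ : dY (μ : Matrix (Fin 2) (Fin 2) PolyXY) = 0 := by
      ext i j
      fin_cases i <;> fin_cases j <;>
        simp [dY, hμ, hh, Matrix.smul_apply, smul_eq_mul,
          MvPolynomial.pderiv_X, Pi.single_apply]
    have hdXν : dX (ν : Matrix (Fin 2) (Fin 2) PolyXY) = 0 := by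
      ext i j
      fin_cases i <;> fin_cases j <;>
        simp [dX, hν, hh, Matrix.smul_apply, smul_eq_mul,
          MvPolynomial.pderiv_X, Pi.single_apply]
    have hdYν : dY (ν : Matrix (Fin 2) (Fin 2) PolyXY) = h := by
      ext i j
      fin_cases i <;> fin_cases j <;>
        simp [dY, hν, hh, Matrix.smul_apply, smul_eq_mul]
    rw [cocycleC, hdXμ, hdYμ, hdXν, hdYν]
    simp [hh, Matrix.trace_fin_two, Matrix.mul_apply, Fin.sum_univ_two]
    norm_num
  have := hθ μ ν
  rw [hbr, map_zero, hc] at this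
  exact two_ne_zero this
end

section
/- The square of the class of c is null in H⁴(sl₂[x,y]) (Proposition 3.6, cochain form): There exists an alternating ℂ-trilinear map b: L × L × L → ℂ such that for all μ₁, μ₂, μ₃, μ₄ ∈ L = sl₂(ℂ[x,y]), ∑_{1 ≤ i < j ≤ 4} (−1)^{i+j} b([μᵢ,μⱼ], μ_k, μ_l) = c(μ₁,μ₂)c(μ₃,μ₄) − c(μ₁,μ₃)c(μ₂,μ₄) + c(μ₁,μ₄)c(μ₂,μ₃), where for each pair i < j the indices k < l are the two remaining elements of {1,2,3,4}. In other words, the cup square c ∪ c of the 2-cocycle c is the Chevalley–Eilenberg coboundary of a 3-cochain. -/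
open scoped BigOperators

attribute [local instance 100] LieRing.ofAssociativeRing

section Aux

open MvPolynomial Matrix

lemma dX_add (A B : Matrix (Fin 2) (Fin 2) PolyXY) : dX (A + B) = dX A + dX B := by
  ext i j; simp [dX]
lemma dY_add (A B : Matrix (Fin 2) (Fin 2) PolyXY) : dY (A + B) = dY A + dY B := by
  ext i j; simp [dY]
lemma dX_smul (r : ℂ) (A : Matrix (Fin 2) (Fin 2) PolyXY) : dX (r • A) = r • dX A := by
  ext i j; simp [dX]
lemma dY_smul (r : ℂ) (A : Matrix (Fin 2) (Fin 2) PolyXY) : dY (r • A) = r • dY A := by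
  ext i j; simp [dY]

/-- The basic trilinear polynomial-valued cochain `Tr(∂_y a · ∂_y b · ∂ₓ² c)`. -/
noncomputable def gg (a b c : Matrix (Fin 2) (Fin 2) PolyXY) : PolyXY :=
  Matrix.trace (dY a * dY b * dX (dX c))

lemma gg_add₁ (a a' b c : Matrix (Fin 2) (Fin 2) PolyXY) :
    gg (a + a') b c = gg a b c + gg a' b c := by
  simp [gg, dY_add, add_mul, Matrix.trace_add]
lemma gg_add₂ (a b b' c : Matrix (Fin 2) (Fin 2) PolyXY) :
    gg a (b + b') c = gg a b c + gg a b' c := by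
  simp [gg, dY_add, mul_add, add_mul, Matrix.trace_add]
lemma gg_add₃ (a b c c' : Matrix (Fin 2) (Fin 2) PolyXY) :
    gg a b (c + c') = gg a b c + gg a b c' := by
  simp [gg, dX_add, mul_add, Matrix.trace_add]
lemma gg_smul₁ (r : ℂ) (a b c : Matrix (Fin 2) (Fin 2) PolyXY) :
    gg (r • a) b c = r • gg a b c := by
  simp [gg, dY_smul, smul_mul_assoc, Matrix.trace_smul]
lemma gg_smul₂ (r : ℂ) (a b c : Matrix (Fin 2) (Fin 2) PolyXY) :
    gg a (r • b) c = r • gg a b c := by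
  simp [gg, dY_smul, mul_smul_comm, smul_mul_assoc, Matrix.trace_smul]
lemma gg_smul₃ (r : ℂ) (a b c : Matrix (Fin 2) (Fin 2) PolyXY) :
    gg a b (r • c) = r • gg a b c := by
  simp [gg, dX_smul, mul_smul_comm, Matrix.trace_smul]

/-- Antisymmetrization of `gg` over `S₃`. -/
noncomputable def GG (a b c : Matrix (Fin 2) (Fin 2) PolyXY) : PolyXY :=
  gg a b c - gg b a c - gg a c b - gg c b a + gg b c a + gg c a b

lemma GG_add₁ (a a' b c : Matrix (Fin 2) (Fin 2) PolyXY) :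
    GG (a + a') b c = GG a b c + GG a' b c := by
  simp only [GG, gg_add₁, gg_add₂, gg_add₃]; ring
lemma GG_add₂ (a b b' c : Matrix (Fin 2) (Fin 2) PolyXY) :
    GG a (b + b') c = GG a b c + GG a b' c := by
  simp only [GG, gg_add₁, gg_add₂, gg_add₃]; ring
lemma GG_add₃ (a b c c' : Matrix (Fin 2) (Fin 2) PolyXY) :
    GG a b (c + c') = GG a b c + GG a b c' := by
  simp only [GG, gg_add₁, gg_add₂, gg_add₃]; ring
lemma GG_smul₁ (r : ℂ) (a b c : Matrix (Fin 2) (Fin 2) PolyXY) :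
    GG (r • a) b c = r • GG a b c := by
  simp only [GG, gg_smul₁, gg_smul₂, gg_smul₃, smul_sub, smul_add]
lemma GG_smul₂ (r : ℂ) (a b c : Matrix (Fin 2) (Fin 2) PolyXY) :
    GG a (r • b) c = r • GG a b c := by
  simp only [GG, gg_smul₁, gg_smul₂, gg_smul₃, smul_sub, smul_add]
lemma GG_smul₃ (r : ℂ) (a b c : Matrix (Fin 2) (Fin 2) PolyXY) :
    GG a b (r • c) = r • GG a b c := by
  simp only [GG, gg_smul₁, gg_smul₂, gg_smul₃, smul_sub, smul_add]

lemma GG_eq₁₂ (a c : Matrix (Fin 2) (Fin 2) PolyXY) : GG a a c = 0 := by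
  simp only [GG]; ring
lemma GG_eq₁₃ (a b : Matrix (Fin 2) (Fin 2) PolyXY) : GG a b a = 0 := by
  simp only [GG]; ring
lemma GG_eq₂₃ (a b : Matrix (Fin 2) (Fin 2) PolyXY) : GG a b b = 0 := by
  simp only [GG]; ring

set_option maxHeartbeats 4000000 in
/-- The core polynomial identity behind Proposition 3.6. -/
lemma key_identity (A₁ A₂ A₃ A₄ : Matrix (Fin 2) (Fin 2) PolyXY)
    (h₁ : A₁ 1 1 = -(A₁ 0 0)) (h₂ : A₂ 1 1 = -(A₂ 0 0))
    (h₃ : A₃ 1 1 = -(A₃ 0 0)) (h₄ : A₄ 1 1 = -(A₄ 0 0)) :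
    -GG (A₁ * A₂ - A₂ * A₁) A₃ A₄ + GG (A₁ * A₃ - A₃ * A₁) A₂ A₄
      - GG (A₁ * A₄ - A₄ * A₁) A₂ A₃ - GG (A₂ * A₃ - A₃ * A₂) A₁ A₄
      + GG (A₂ * A₄ - A₄ * A₂) A₁ A₃ - GG (A₃ * A₄ - A₄ * A₃) A₁ A₂ =
    (-4 : PolyXY) *
      (Matrix.trace (dX A₁ * dY A₂ - dY A₁ * dX A₂) * Matrix.trace (dX A₃ * dY A₄ - dY A₃ * dX A₄)
       - Matrix.trace (dX A₁ * dY A₃ - dY A₁ * dX A₃) * Matrix.trace (dX A₂ * dY A₄ - dY A₂ * dX A₄)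
       + Matrix.trace (dX A₁ * dY A₄ - dY A₁ * dX A₄) * Matrix.trace (dX A₂ * dY A₃ - dY A₂ * dX A₃)) := by
  simp only [GG, gg, dX, dY, Matrix.trace_fin_two, Matrix.mul_apply, Matrix.sub_apply,
    Matrix.of_apply, Fin.sum_univ_two, map_add, map_sub, MvPolynomial.pderiv_mul]
  rw [h₁, h₂, h₃, h₄]
  simp only [map_neg]
  ring

lemma sl2_coe_smul (r : ℂ) (x : sl2XY) :
    ((r • x : sl2XY) : Matrix (Fin 2) (Fin 2) PolyXY)
      = r • (x : Matrix (Fin 2) (Fin 2) PolyXY) := rfl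

/-- The 3-cochain `b`, as an alternating trilinear map. -/
noncomputable def bCochain : (sl2XY [⋀^Fin 3]→ₗ[ℂ] ℂ) where
  toFun v := (-(1:ℂ)/4) *
    MvPolynomial.constantCoeff (GG (v 0 : Matrix (Fin 2) (Fin 2) PolyXY) (v 1) (v 2))
  map_update_add' := by
    intro inst m i x y
    have hinst : inst = instDecidableEqFin 3 := Subsingleton.elim _ _
    subst hinst
    fin_cases i <;>
      simp [Function.update_apply, GG_add₁, GG_add₂, GG_add₃, mul_add]
  map_update_smul' := by
    intro inst m i r x
    have hinst : inst = instDecidableEqFin 3 := Subsingleton.elim _ _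
    subst hinst
    fin_cases i <;>
      simp [Function.update_apply, sl2_coe_smul, GG_smul₁, GG_smul₂, GG_smul₃,
        smul_eq_mul] <;> ring
  map_eq_zero_of_eq' := by
    intro v i j h hij
    have h' : ∀ a b : Fin 3, v a = v b →
        ((v a : sl2XY) : Matrix (Fin 2) (Fin 2) PolyXY) = v b := fun a b hh => congrArg _ hh
    have hfin : ∀ k : Fin 3, k = 0 ∨ k = 1 ∨ k = 2 := by decide
    show (-(1:ℂ)/4) * MvPolynomial.constantCoeff
      (GG (v 0 : Matrix (Fin 2) (Fin 2) PolyXY) (v 1) (v 2)) = 0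
    rcases hfin i with hi | hi | hi <;> rcases hfin j with hj | hj | hj <;> subst hi <;> subst hj
    · exact absurd rfl hij
    · rw [h' 0 1 h, GG_eq₁₂, map_zero, mul_zero]
    · rw [h' 0 2 h, GG_eq₁₃, map_zero, mul_zero]
    · rw [h' 1 0 h, GG_eq₁₂, map_zero, mul_zero]
    · exact absurd rfl hij
    · rw [h' 1 2 h, GG_eq₂₃, map_zero, mul_zero]
    · rw [h' 2 0 h, GG_eq₁₃, map_zero, mul_zero]
    · rw [h' 2 1 h, GG_eq₂₃, map_zero, mul_zero]
    · exact absurd rfl hij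

/-- **The square of the class `c` is null in `H⁴(sl₂[x,y])`**
(Proposition 3.6 of the paper, cochain form): the cup square `c ∪ c` is the
Chevalley–Eilenberg coboundary of an alternating `ℂ`-trilinear 3-cochain `b`. -/
theorem sl2_polyXY_cocycle_square_null :
    ∃ b : (sl2XY [⋀^Fin 3]→ₗ[ℂ] ℂ),
      ∀ μ₁ μ₂ μ₃ μ₄ : sl2XY,
        -b ![⁅μ₁, μ₂⁆, μ₃, μ₄] + b ![⁅μ₁, μ₃⁆, μ₂, μ₄] - b ![⁅μ₁, μ₄⁆, μ₂, μ₃]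
          - b ![⁅μ₂, μ₃⁆, μ₁, μ₄] + b ![⁅μ₂, μ₄⁆, μ₁, μ₃]
          - b ![⁅μ₃, μ₄⁆, μ₁, μ₂] =
        cocycleC (μ₁ : Matrix (Fin 2) (Fin 2) PolyXY) μ₂ * cocycleC (μ₃ : Matrix (Fin 2) (Fin 2) PolyXY) μ₄
          - cocycleC (μ₁ : Matrix (Fin 2) (Fin 2) PolyXY) μ₃ * cocycleC (μ₂ : Matrix (Fin 2) (Fin 2) PolyXY) μ₄
          + cocycleC (μ₁ : Matrix (Fin 2) (Fin 2) PolyXY) μ₄ * cocycleC (μ₂ : Matrix (Fin 2) (Fin 2) PolyXY) μ₃ := by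
  refine ⟨bCochain, fun μ₁ μ₂ μ₃ μ₄ => ?_⟩
  have hb : ∀ v : Fin 3 → sl2XY, bCochain v = (-(1:ℂ)/4) *
      MvPolynomial.constantCoeff (GG (v 0 : Matrix (Fin 2) (Fin 2) PolyXY) (v 1) (v 2)) :=
    fun v => rfl
  have tr0 : ∀ μ : sl2XY, (μ : Matrix (Fin 2) (Fin 2) PolyXY) 1 1
      = -((μ : Matrix (Fin 2) (Fin 2) PolyXY) 0 0) := by
    intro μ
    have hμ : Matrix.trace (μ : Matrix (Fin 2) (Fin 2) PolyXY) = 0 := μ.2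
    rw [Matrix.trace_fin_two] at hμ
    linear_combination hμ
  have hk := key_identity (μ₁ : Matrix (Fin 2) (Fin 2) PolyXY) μ₂ μ₃ μ₄
    (tr0 μ₁) (tr0 μ₂) (tr0 μ₃) (tr0 μ₄)
  have hk' := congrArg (MvPolynomial.constantCoeff (σ := Fin 2) (R := ℂ)) hk
  simp only [map_add, map_sub, map_neg, _root_.map_mul, map_ofNat] at hk'
  simp only [hb, Matrix.cons_val_zero, Matrix.cons_val_one, Matrix.cons_val_two,
    Matrix.head_cons, Matrix.tail_cons, LieSubalgebra.coe_bracket, Ring.lie_def, cocycleC]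
  linear_combination (-(1:ℂ)/4) * hk'
end Aux
end
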